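/- Let A be a multiset of positive integers with even sum S, max A ≤ S/2, r = S mod 3, A' = A ∪ {S/2+4−r, S/2+4−r}, and C = 2(S+4−r)/3. If A can be partitioned into two subsets A_1, A_2 each of sum S/2, then A' admits a balanced fractional packing into 3 bins of capacity C with proportionality factors 2/3, 2/3, 1/3, where each object is split across exactly 2 bins: bin 1 holds 2/3 of each element of A_1 ∪ {S/2+4−r}, bin 2 holds 2/3 of each element of A_2 ∪ {S/2+4−r}, and bin 3 holds 1/3 of every element of A'. -/

import Mathlib

open scoped Classical

lemma filter_lt_eq_map_castAddEmb (n m : ℕ) :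
    Finset.univ.filter (fun i : Fin (n+m) => i.val < n)
      = Finset.map (Fin.castAddEmb m) Finset.univ := by
  ext i
  simp [Fin.castAddEmb, Fin.exists_iff, Fin.ext_iff]

lemma filter_not_lt_eq_map_natAddEmb (n m : ℕ) :
    Finset.univ.filter (fun i : Fin (n+m) => ¬ i.val < n)
      = Finset.map (Fin.natAddEmb n) Finset.univ := by
  ext i
  simp [Fin.exists_iff, Fin.ext_iff]
  constructor
  · intro h; exact ⟨i - n, by omega, by omega⟩
  · rintro ⟨j, hj, h⟩; omega

lemma univ_val_map_eq_ofFn {β : Type*} (n : ℕ) (f : Fin n → β) :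
    (Finset.univ.val.map f) = ↑(List.ofFn f) := by
  rw [List.ofFn_eq_map]
  rfl

/-- Converse direction (k = 2): if `A` (positive integers, even sum `S`, `max A ≤ S/2`)
can be partitioned into `A₁, A₂` each of sum `S/2`, then `A' = A + {S/2+4-r, S/2+4-r}`
(`r = S % 3`) admits a balanced fractional packing into 3 bins of capacity
`2(S+4-r)/3` with factors `2/3, 2/3, 1/3`, where bin 1 holds `2/3` of each element of
`A₁ ∪ {S/2+4-r}`, bin 2 holds `2/3` of each element of `A₂ ∪ {S/2+4-r}`, and bin 3 holds
`1/3` of every element of `A'`; in particular each bin is filled to exactly the capacity. -/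
theorem partition_implies_balanced_packing
    (A : Multiset ℕ) (hpos : ∀ x ∈ A, 0 < x) (S : ℕ) (hS : S = A.sum)
    (heven : Even S) (hmaxA : ∀ x ∈ A, x ≤ S / 2)
    (r : ℕ) (hr : r = S % 3)
    (A' : Multiset ℕ) (hA' : A' = A + {S / 2 + 4 - r, S / 2 + 4 - r})
    (Cap : ℝ) (hCap : Cap = 2 * ((S : ℝ) + 4 - (r : ℝ)) / 3)
    (A₁ A₂ : Multiset ℕ) (hpart : A = A₁ + A₂)
    (h1 : 2 * A₁.sum = S) (h2 : 2 * A₂.sum = S) :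
    ∃ (N : ℕ) (a : Fin N → ℕ) (lam : Fin N → Fin 3 → ℝ),
      (↑(List.ofFn a) : Multiset ℕ) = A' ∧
      (∀ i j, lam i j = 0 ∨ lam i j = (if (j : ℕ) < 2 then (2 : ℝ) / 3 else 1 / 3)) ∧
      (∀ i, ∑ j, lam i j = 1) ∧
      (∀ i, lam i 2 = 1 / 3) ∧
      (∀ i, lam i 0 = 0 ∨ lam i 1 = 0) ∧
      (∀ j, ∑ i, (a i : ℝ) * lam i j = Cap) ∧
      Multiset.map a (Finset.univ.filter (fun i => lam i 0 ≠ 0)).val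
        = A₁ + {S / 2 + 4 - r} ∧
      Multiset.map a (Finset.univ.filter (fun i => lam i 1 ≠ 0)).val
        = A₂ + {S / 2 + 4 - r} := by
  set m : ℕ := S / 2 + 4 - r with hm
  set l₁ : List ℕ := (A₁ + {m}).toList with hl₁
  set l₂ : List ℕ := (A₂ + {m}).toList with hl₂
  set n₁ : ℕ := l₁.length with hn₁
  set n₂ : ℕ := l₂.length with hn₂
  set f₁ : Fin n₁ → ℕ := fun i => l₁.get i with hf₁
  set f₂ : Fin n₂ → ℕ := fun i => l₂.get i with hf₂
  refine ⟨n₁ + n₂, Fin.append f₁ f₂,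
    fun i j => if (j : ℕ) = 2 then (1 : ℝ)/3
               else if i.val < n₁ then (if (j : ℕ) = 0 then (2 : ℝ)/3 else 0)
               else (if (j : ℕ) = 0 then 0 else (2 : ℝ)/3),
    ?_, ?_, ?_, ?_, ?_, ?_, ?_, ?_⟩
  · rw [List.ofFn_fin_append, List.ofFn_get, List.ofFn_get]
    show ((l₁ ++ l₂ : List ℕ) : Multiset ℕ) = A'
    rw [← Multiset.coe_add, hl₁, hl₂, Multiset.coe_toList, Multiset.coe_toList, hA', hpart]
    have : ({m, m} : Multiset ℕ) = {m} + {m} := rfl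
    rw [this]
    abel
  · intro i j
    by_cases h : i.val < n₁ <;> fin_cases j <;> norm_num [h]
  · intro i
    by_cases h : i.val < n₁ <;> norm_num [Fin.sum_univ_three, h]
  · intro i
    norm_num
  · intro i
    by_cases h : i.val < n₁ <;> norm_num [h]
  · -- the sums
    have hr3 : r < 3 := hr ▸ Nat.mod_lt _ (by norm_num)
    have h2S : 2 * (S / 2) = S := Nat.two_mul_div_two_of_even heven
    have hhalf : ((S / 2 : ℕ) : ℝ) = (S : ℝ) / 2 := by
      have := congrArg (Nat.cast : ℕ → ℝ) h2S
      push_cast at this; linarith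
    have hmcast : (m : ℝ) = (S : ℝ) / 2 + 4 - r := by
      have : (m : ℝ) = ((S / 2 + 4 : ℕ) : ℝ) - r := by
        rw [hm]; exact_mod_cast Nat.cast_sub (by omega)
      rw [this]; push_cast [hhalf]; ring
    have hs1 : ((A₁.sum : ℕ) : ℝ) = (S : ℝ) / 2 := by
      have : (2:ℝ) * (A₁.sum : ℕ) = S := by exact_mod_cast congrArg (Nat.cast : ℕ → ℝ) h1
      linarith
    have hs2 : ((A₂.sum : ℕ) : ℝ) = (S : ℝ) / 2 := by
      have : (2:ℝ) * (A₂.sum : ℕ) = S := by exact_mod_cast congrArg (Nat.cast : ℕ → ℝ) h2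
      linarith
    have hsum1 : ∑ i : Fin n₁, ((f₁ i : ℕ) : ℝ) = (S : ℝ) / 2 + (m : ℝ) := by
      have e : ∑ i : Fin n₁, ((f₁ i : ℕ) : ℝ) = (l₁.map (Nat.cast : ℕ → ℝ)).sum := by
        conv_rhs => rw [← List.ofFn_get l₁, List.map_ofFn, List.sum_ofFn]
        rfl
      rw [e, ← Nat.cast_list_sum, hl₁, Multiset.sum_toList, Multiset.sum_add,
        Multiset.sum_singleton]
      push_cast [hs1]
      ring
    have hsum2 : ∑ i : Fin n₂, ((f₂ i : ℕ) : ℝ) = (S : ℝ) / 2 + (m : ℝ) := by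
      have e : ∑ i : Fin n₂, ((f₂ i : ℕ) : ℝ) = (l₂.map (Nat.cast : ℕ → ℝ)).sum := by
        conv_rhs => rw [← List.ofFn_get l₂, List.map_ofFn, List.sum_ofFn]
        rfl
      rw [e, ← Nat.cast_list_sum, hl₂, Multiset.sum_toList, Multiset.sum_add,
        Multiset.sum_singleton]
      push_cast [hs2]
      ring
    intro j
    rw [Fin.sum_univ_add]
    have hL : ∀ i : Fin n₁, (Fin.castAdd n₂ i).val < n₁ := fun i => i.isLt
    have hR : ∀ i : Fin n₂, ¬ (Fin.natAdd n₁ i).val < n₁ := fun i => by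
      simp [Fin.natAdd]
    fin_cases j <;>
      simp only [Fin.append_left, Fin.append_right, hL, hR, if_true, if_false,
        reduceIte, ite_true, ite_false] <;>
      norm_num [← Finset.sum_mul, hsum1, hsum2, hCap, hmcast] <;>
      ring
  · have hfil : (Finset.univ.filter
        (fun i : Fin (n₁ + n₂) =>
          (if ((0 : Fin 3) : ℕ) = 2 then (1 : ℝ)/3
           else if i.val < n₁ then (if ((0 : Fin 3) : ℕ) = 0 then (2 : ℝ)/3 else 0)
           else (if ((0 : Fin 3) : ℕ) = 0 then 0 else (2 : ℝ)/3)) ≠ 0))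
        = Finset.univ.filter (fun i : Fin (n₁ + n₂) => i.val < n₁) := by
      apply Finset.filter_congr; intro i _
      by_cases h : i.val < n₁ <;> simp [h]
    rw [hfil, filter_lt_eq_map_castAddEmb, Finset.map_val, Multiset.map_map]
    have : (Fin.append f₁ f₂) ∘ (Fin.castAddEmb n₂) = f₁ := by
      funext i; exact Fin.append_left f₁ f₂ i
    rw [this, univ_val_map_eq_ofFn, List.ofFn_get l₁, hl₁, Multiset.coe_toList]
  · have hfil : (Finset.univ.filter
        (fun i : Fin (n₁ + n₂) =>
          (if ((1 : Fin 3) : ℕ) = 2 then (1 : ℝ)/3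
           else if i.val < n₁ then (if ((1 : Fin 3) : ℕ) = 0 then (2 : ℝ)/3 else 0)
           else (if ((1 : Fin 3) : ℕ) = 0 then 0 else (2 : ℝ)/3)) ≠ 0))
        = Finset.univ.filter (fun i : Fin (n₁ + n₂) => ¬ i.val < n₁) := by
      apply Finset.filter_congr; intro i _
      by_cases h : i.val < n₁ <;> simp [h]
    rw [hfil, filter_not_lt_eq_map_natAddEmb, Finset.map_val, Multiset.map_map]
    have : (Fin.append f₁ f₂) ∘ (Fin.natAddEmb n₁) = f₂ := by
      funext i; exact Fin.append_right f₁ f₂ i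
    rw [this, univ_val_map_eq_ofFn, List.ofFn_get l₂, hl₂, Multiset.coe_toList]
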